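/- If A₁,…,A_M are pairwise independent events in a probability space, then Pr(⋃_{i=1}^M A_i) ≥ (1/2)·min{1, ∑_{i=1}^M Pr(A_i)}. -/

import Mathlib

open MeasureTheory ENNReal

/-- If `A₁,…,A_M` are pairwise independent events in a probability space,
then `Pr(⋃ᵢ Aᵢ) ≥ (1/2)·min{1, ∑ᵢ Pr(Aᵢ)}`. -/
theorem stmt3 {Ω : Type*} [MeasurableSpace Ω] (μ : Measure Ω) [IsProbabilityMeasure μ]
    (M : ℕ) (A : Fin M → Set Ω) (hA : ∀ i, MeasurableSet (A i))
    (hind : ∀ i j, i ≠ j → μ (A i ∩ A j) = μ (A i) * μ (A j)) :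
    min 1 (∑ i, μ (A i)) / 2 ≤ μ (⋃ i, A i) := by
  classical
  set S := ∑ i, μ (A i) with hSdef
  rcases eq_or_ne S 0 with hS0 | hS0
  · simp [hS0]
  set U := ⋃ i, A i with hUdef
  have hUm : MeasurableSet U := MeasurableSet.iUnion hA
  set f : Ω → ℝ≥0∞ := fun ω => ∑ i, (A i).indicator 1 ω with hfdef
  have hfim : ∀ i : Fin M, Measurable ((A i).indicator (1 : Ω → ℝ≥0∞)) :=
    fun i => measurable_one.indicator (hA i)
  have hfm : Measurable f := by
    apply Finset.measurable_sum
    intro i _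
    exact hfim i
  set g : Ω → ℝ≥0∞ := U.indicator 1 with hgdef
  have hgm : Measurable g := measurable_one.indicator hUm
  have hfg : (f * g) = f := by
    funext ω
    by_cases h : ω ∈ U
    · simp [hgdef, Set.indicator_of_mem h]
    · have h' : ∀ i, ω ∉ A i := fun i hi => h (Set.mem_iUnion.2 ⟨i, hi⟩)
      simp [hgdef, hfdef, Set.indicator_of_notMem h, Set.indicator_of_notMem (h' _)]
  have hintf : ∫⁻ ω, f ω ∂μ = S := by
    rw [hfdef]
    rw [lintegral_finset_sum _ fun i _ => hfim i]
    simp [lintegral_indicator_one, hA, hSdef]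
  have hintg : ∫⁻ ω, g ω ^ (2:ℝ) ∂μ = μ U := by
    have : ∀ ω, g ω ^ (2:ℝ) = g ω := by
      intro ω
      rw [hgdef]
      by_cases h : ω ∈ U
      · simp [Set.indicator_of_mem h]
      · simp [Set.indicator_of_notMem h, ENNReal.zero_rpow_of_pos]
    simp_rw [this]
    exact lintegral_indicator_one hUm
  have hsq : ∫⁻ ω, f ω ^ (2:ℕ) ∂μ ≤ S + S * S := by
    have h2 : ∀ ω, f ω ^ (2:ℕ) = ∑ i, ∑ j, (A i ∩ A j).indicator 1 ω := by
      intro ω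
      rw [pow_two, hfdef, Finset.sum_mul_sum]
      refine Finset.sum_congr rfl fun i _ => Finset.sum_congr rfl fun j _ => ?_
      rw [← Set.inter_indicator_mul]
      simp only [Pi.one_apply, mul_one]
      rfl
    have h3 : ∫⁻ ω, f ω ^ (2:ℕ) ∂μ = ∑ i, ∑ j, μ (A i ∩ A j) := by
      simp_rw [h2]
      rw [lintegral_finset_sum _ fun i _ => Finset.measurable_sum _
        fun j _ => measurable_one.indicator ((hA i).inter (hA j))]
      refine Finset.sum_congr rfl fun i _ => ?_
      rw [lintegral_finset_sum _ fun j _ => measurable_one.indicator ((hA i).inter (hA j))]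
      exact Finset.sum_congr rfl fun j _ => lintegral_indicator_one ((hA i).inter (hA j))
    rw [h3]
    have h4 : ∀ i : Fin M, ∑ j, μ (A i ∩ A j) ≤ μ (A i) + μ (A i) * S := by
      intro i
      rw [← Finset.add_sum_erase _ _ (Finset.mem_univ i), Set.inter_self]
      refine add_le_add le_rfl ?_
      calc ∑ j ∈ Finset.univ.erase i, μ (A i ∩ A j)
          = ∑ j ∈ Finset.univ.erase i, μ (A i) * μ (A j) := by
            refine Finset.sum_congr rfl fun j hj => ?_
            exact hind i j (Ne.symm (Finset.ne_of_mem_erase hj))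
        _ ≤ ∑ j, μ (A i) * μ (A j) :=
            Finset.sum_le_sum_of_subset (Finset.subset_univ _)
        _ = μ (A i) * S := by rw [hSdef, Finset.mul_sum]
    calc ∑ i, ∑ j, μ (A i ∩ A j) ≤ ∑ i, (μ (A i) + μ (A i) * S) :=
          Finset.sum_le_sum fun i _ => h4 i
      _ = S + S * S := by
          rw [Finset.sum_add_distrib, ← Finset.sum_mul, ← hSdef]
  -- Cauchy-Schwarz
  have hconj : Real.HolderConjugate 2 2 := Real.HolderConjugate.two_two
  have hCS := ENNReal.lintegral_mul_le_Lp_mul_Lq μ hconj hfm.aemeasurable hgm.aemeasurable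
  rw [hfg, hintf, hintg] at hCS
  have hCS2 : S * S ≤ (∫⁻ ω, f ω ^ (2:ℕ) ∂μ) * μ U := by
    have := ENNReal.rpow_le_rpow hCS (by norm_num : (0:ℝ) ≤ 2)
    rw [ENNReal.mul_rpow_of_nonneg _ _ (by norm_num : (0:ℝ) ≤ 2),
      ← ENNReal.rpow_mul, ← ENNReal.rpow_mul] at this
    norm_num at this
    rw [pow_two] at this
    exact this
  have hmain : S * S ≤ (S + S * S) * μ U :=
    le_trans hCS2 (mul_le_mul_left hsq _)
  -- finiteness
  have hSfin : S ≠ ∞ := by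
    rw [hSdef]
    exact (ENNReal.sum_lt_top.2 fun i _ => measure_lt_top μ _).ne
  have hD0 : S + S * S ≠ 0 := by
    simp [hS0]
  have hDtop : S + S * S ≠ ∞ := by
    simp [ENNReal.add_ne_top, ENNReal.mul_ne_top, hSfin]
  -- key claim
  have hclaim : min 1 S * (S + S * S) ≤ (2 * μ U) * (S + S * S) := by
    have hmid : min 1 S * (S + S * S) ≤ 2 * (S * S) := by
      rcases le_total S 1 with h | h
      · rw [min_eq_right h, mul_add, two_mul]
        refine add_le_add le_rfl ?_
        calc S * (S * S) ≤ 1 * (S * S) := mul_le_mul_left h _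
          _ = S * S := one_mul _
      · rw [min_eq_left h, one_mul, two_mul]
        refine add_le_add ?_ le_rfl
        calc S = 1 * S := (one_mul S).symm
          _ ≤ S * S := mul_le_mul_left h _
    calc min 1 S * (S + S * S) ≤ 2 * (S * S) := hmid
      _ ≤ 2 * ((S + S * S) * μ U) := mul_le_mul_right hmain _
      _ = (2 * μ U) * (S + S * S) := by ring
  have hfinal : min 1 S ≤ 2 * μ U :=
    (ENNReal.mul_le_mul_iff_left hD0 hDtop).mp hclaim
  rw [ENNReal.div_le_iff (by norm_num) (by norm_num)]
  calc min 1 S ≤ 2 * μ U := hfinal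
    _ = μ U * 2 := mul_comm _ _
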